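/- For integers n = 2m with m ≥ 1 and m−1 ≤ j ≤ n−1, the sum Σ_{k=1}^{n} (−1)^{j+k+m} C(n−k, m−k) C(j+1, k−1) equals 1 if j = m−1, and equals 0 if m ≤ j < n−1. -/

import Mathlib

/-- Binomial coefficient for integer arguments, with the convention that
`C a b = 0` when `b < 0` or `b > a`. -/
def C (a b : ℤ) : ℤ := if 0 ≤ b ∧ b ≤ a then (a.toNat.choose b.toNat : ℤ) else 0

lemma C_natCast (a b : ℕ) : C (a : ℤ) (b : ℤ) = (a.choose b : ℤ) := by
  by_cases h : b ≤ a
  · rw [C, if_pos ⟨by positivity, by exact_mod_cast h⟩]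
    simp
  · rw [C, if_neg (by push_neg; intro _; omega), Nat.choose_eq_zero_of_lt (by omega)]
    simp

lemma C_neg {a b : ℤ} (h : b < 0) : C a b = 0 := by
  rw [C, if_neg (by omega)]

/-- `F c a n = ∑_{i=0}^n (-1)^i C(a,i) C(n+c-i,c)`. -/
def F (c a n : ℕ) : ℤ :=
  ∑ i ∈ Finset.range (n + 1), (-1) ^ i * (a.choose i : ℤ) * ((n + c - i).choose c : ℤ)

/-- Closed form for `F`. -/
def g (c a n : ℕ) : ℤ :=
  if a ≤ c then ((c - a + n).choose n : ℤ) else (-1) ^ n * ((a - c - 1).choose n : ℤ)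

lemma F_succ (c a n : ℕ) : F c (a + 1) (n + 1) = F c a (n + 1) - F c a n := by
  have h1 : F c (a + 1) (n + 1)
      = ∑ i ∈ Finset.range (n + 1),
          (-1) ^ (i + 1) * ((a.choose i : ℤ) + (a.choose (i + 1) : ℤ))
            * ((n + c - i).choose c : ℤ)
        + ((n + 1 + c).choose c : ℤ) := by
    rw [F, Finset.sum_range_succ']
    congr 1
    · refine Finset.sum_congr rfl fun i hi => ?_
      have e : n + 1 + c - (i + 1) = n + c - i := by omega
      rw [e, Nat.choose_succ_succ]
      push_cast
      ring
    · simp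
  have h2 : F c a (n + 1)
      = ∑ i ∈ Finset.range (n + 1),
          (-1) ^ (i + 1) * (a.choose (i + 1) : ℤ) * ((n + c - i).choose c : ℤ)
        + ((n + 1 + c).choose c : ℤ) := by
    rw [F, Finset.sum_range_succ']
    congr 1
    · refine Finset.sum_congr rfl fun i hi => ?_
      have e : n + 1 + c - (i + 1) = n + c - i := by omega
      rw [e]
    · simp
  have h3 : (∑ i ∈ Finset.range (n + 1),
        (-1) ^ (i + 1) * ((a.choose i : ℤ) + (a.choose (i + 1) : ℤ))
          * ((n + c - i).choose c : ℤ))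
      + F c a n
      = ∑ i ∈ Finset.range (n + 1),
          (-1) ^ (i + 1) * (a.choose (i + 1) : ℤ) * ((n + c - i).choose c : ℤ) := by
    rw [F, ← Finset.sum_add_distrib]
    refine Finset.sum_congr rfl fun i hi => ?_
    ring
  linarith [h1, h2, h3]

lemma F_eq_g (c a n : ℕ) : F c a n = g c a n := by
  induction a generalizing n with
  | zero =>
    rw [F, g, if_pos (Nat.zero_le c)]
    rw [Finset.sum_eq_single 0]
    · have key : (n + c).choose c = (c - 0 + n).choose n := by
        rw [Nat.sub_zero, Nat.add_comm n c, ← Nat.choose_symm (Nat.le_add_right c n),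
          Nat.add_sub_cancel_left]
      simp only [pow_zero, Nat.choose_zero_right, Nat.cast_one, one_mul, Nat.sub_zero]
      exact_mod_cast key
    · intro i _ hi
      rcases Nat.exists_eq_succ_of_ne_zero hi with ⟨i', rfl⟩
      simp
    · simp
  | succ a ih =>
    cases n with
    | zero =>
      rw [F]
      simp only [Finset.range_one, Finset.sum_singleton, pow_zero, Nat.choose_zero_right,
        Nat.cast_one, one_mul, Nat.sub_zero, Nat.zero_add, Nat.choose_self]
      rw [g]
      split <;> simp
    | succ n =>
      rw [F_succ, ih, ih]
      by_cases h1 : a + 1 ≤ c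
      · have h2' : a ≤ c := by omega
        simp only [g, if_pos h1, if_pos h2']
        have e1 : c - (a + 1) + (n + 1) = c - a + n := by omega
        have e2 : c - a + (n + 1) = (c - a + n) + 1 := by omega
        rw [e1, e2, Nat.choose_succ_succ]
        push_cast
        ring
      · by_cases h2 : a ≤ c
        · have hac : a = c := by omega
          simp only [g, if_neg h1, if_pos h2, hac]
          simp
        · simp only [g, if_neg h1, if_neg h2]
          have e1 : a + 1 - c - 1 = (a - c - 1) + 1 := by omega
          rw [e1, Nat.choose_succ_succ]
          push_cast
          ring

lemma main_sum (m j : ℕ) (hm : 1 ≤ m) :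
    ∑ k ∈ Finset.Icc 1 (2 * m),
        (-1 : ℤ) ^ (j + k + m) * C ((2 * m : ℤ) - k) ((m : ℤ) - k) * C ((j : ℤ) + 1) ((k : ℤ) - 1)
      = (-1) ^ (j + m + 1) * F m (j + 1) (m - 1) := by
  rw [← Finset.Ico_add_one_right_eq_Icc, Finset.sum_Ico_eq_sum_range]
  have hr : 2 * m + 1 - 1 = 2 * m := by omega
  rw [hr]
  rw [← Finset.sum_subset (Finset.range_subset_range.2 (by omega : m ≤ 2 * m))]
  · rw [F, Finset.mul_sum]
    have hrange : m - 1 + 1 = m := by omega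
    rw [hrange]
    refine Finset.sum_congr rfl fun i hi => ?_
    have him : i < m := Finset.mem_range.1 hi
    have e1 : ((2 * m : ℤ)) - ((1 + i : ℕ) : ℤ) = ((2 * m - 1 - i : ℕ) : ℤ) := by
      push_cast; omega
    have e2 : ((m : ℤ)) - ((1 + i : ℕ) : ℤ) = ((m - 1 - i : ℕ) : ℤ) := by
      push_cast; omega
    have e3 : ((j : ℤ)) + 1 = ((j + 1 : ℕ) : ℤ) := by push_cast; ring
    have e4 : (((1 + i : ℕ)) : ℤ) - 1 = ((i : ℕ) : ℤ) := by push_cast; ring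
    rw [e1, e2, e3, e4, C_natCast, C_natCast]
    have e5 : (2 * m - 1 - i).choose (m - 1 - i) = (2 * m - 1 - i).choose m := by
      rw [show m - 1 - i = (2 * m - 1 - i) - m by omega]
      exact Nat.choose_symm (by omega)
    have e6 : m - 1 + m - i = 2 * m - 1 - i := by omega
    rw [e5, e6]
    have e7 : (-1 : ℤ) ^ (j + (1 + i) + m) = (-1) ^ (j + m + 1) * (-1) ^ i := by
      rw [← pow_add]
      congr 1
      omega
    rw [e7]
    ring
  · intro i hi him
    have : ((m : ℤ)) - ((1 + i : ℕ) : ℤ) < 0 := by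
      push_cast
      have := Finset.mem_range.not.1 him
      omega
    rw [C_neg this]
    ring

/-- For `n = 2m`, `m ≥ 1`, `m−1 ≤ j ≤ n−1`: the alternating sum
`∑_{k=1}^{n} (−1)^{j+k+m} C(n−k, m−k) C(j+1, k−1)` equals `1` if `j = m−1`,
and equals `0` if `m ≤ j < n−1`. -/
theorem alternating_sum_U (m j : ℕ) (hm : 1 ≤ m) (hj1 : m - 1 ≤ j) (hj2 : j ≤ 2 * m - 1) :
    (j = m - 1 →
      ∑ k ∈ Finset.Icc 1 (2 * m),
        (-1 : ℤ) ^ (j + k + m) * C ((2 * m : ℤ) - k) ((m : ℤ) - k) * C ((j : ℤ) + 1) ((k : ℤ) - 1)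
        = 1) ∧
    (m ≤ j → j < 2 * m - 1 →
      ∑ k ∈ Finset.Icc 1 (2 * m),
        (-1 : ℤ) ^ (j + k + m) * C ((2 * m : ℤ) - k) ((m : ℤ) - k) * C ((j : ℤ) + 1) ((k : ℤ) - 1)
        = 0) := by
  constructor
  · intro hjm
    subst hjm
    rw [main_sum m (m - 1) hm, F_eq_g, g, if_pos (by omega : m - 1 + 1 ≤ m)]
    have e1 : m - (m - 1 + 1) + (m - 1) = m - 1 := by omega
    rw [e1, Nat.choose_self]
    have e2 : m - 1 + m + 1 = 2 * m := by omega
    rw [e2, pow_mul]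
    norm_num
  · intro hj hj'
    rw [main_sum m j hm, F_eq_g, g, if_neg (by omega)]
    rw [Nat.choose_eq_zero_of_lt (by omega : j + 1 - m - 1 < m - 1)]
    simp
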